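/- The triple (PR_k, ε, (·)*) is a comonad in coKleisli form on the category of σ-structures: for any σ-structure A, the counit ε_A : PR_k A → A given by ε_A([(p_1,a_1),...,(p_n,a_n)], i) = a_i is a σ-homomorphism, and for any σ-homomorphism f : PR_k A → B, the coextension f* : PR_k A → PR_k B given by f*(s,i) = (t,i), where t has the same pebble indices as s and j-th element f(s,j), is a σ-homomorphism, and these satisfy ε_A* = id, ε ∘ f* = f, and (g ∘ f*)* = g* ∘ f*. -/

import Mathlib

/-- A relational signature: a type of relation symbols with arities. -/
structure Signature where
  symb : Type
  ar : symb → ℕ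

/-- A σ-structure: a universe with interpretations of the relation symbols. -/
structure Struct (σ : Signature) where
  carrier : Type
  rel : ∀ r : σ.symb, (Fin (σ.ar r) → carrier) → Prop

/-- σ-homomorphism. -/
def Hom {σ : Signature} (A B : Struct σ) (f : A.carrier → B.carrier) : Prop :=
  ∀ r x, A.rel r x → B.rel r (fun j => f (x j))

/-- Sequences of pebble placements. -/
abbrev PSeq (k : ℕ) (α : Type) := List (Fin k × α)

/-- Universe of PR_k A: a play together with an index into it. -/
def PRW (k : ℕ) (α : Type) : Type := { p : PSeq k α × ℕ // p.2 < p.1.length }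

def eltOf {k : ℕ} {α : Type} (w : PRW k α) : α := (w.1.1.get ⟨w.1.2, w.2⟩).2
def pebOf {k : ℕ} {α : Type} (w : PRW k α) : Fin k := (w.1.1.get ⟨w.1.2, w.2⟩).1

/-- The pebble p (placed at position i) does not reoccur at positions i+1,...,m of s. -/
def NoReoccur {k : ℕ} {α : Type} (s : PSeq k α) (i m : ℕ) (p : Fin k) : Prop :=
  ∀ l (h : l < s.length), i < l → l ≤ m → (s.get ⟨l, h⟩).1 ≠ p

/-- The pebble-relation construction PR_k on σ-structures. -/
def PR {σ : Signature} (k : ℕ) (A : Struct σ) : Struct σ where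
  carrier := PRW k A.carrier
  rel r x :=
    (∀ j j', (x j).1.1 = (x j').1.1) ∧
    (∀ j j', NoReoccur (x j).1.1 (x j).1.2 (x j').1.2 (pebOf (x j))) ∧
    A.rel r (fun j => eltOf (x j))

/-- Counit ε(s,i) = a_i. -/
def counit {k : ℕ} {α : Type} (w : PRW k α) : α := eltOf w

/-- Coextension f*(s,i) = (t,i) with same pebbles and j-th element f(s,j). -/
def coext {k : ℕ} {α β : Type} (f : PRW k α → β) (w : PRW k α) : PRW k β :=
  ⟨(List.ofFn (fun j : Fin w.1.1.length => ((w.1.1.get j).1, f ⟨(w.1.1, j.1), j.2⟩)), w.1.2),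
   by simpa using w.2⟩

/-- Comultiplication δ = (id)*. -/
def comult {k : ℕ} {α : Type} : PRW k α → PRW k (PRW k α) := coext id

/-- Functor action PR_k f = (f ∘ ε)*. -/
def PRmap {k : ℕ} {α β : Type} (f : α → β) : PRW k α → PRW k β :=
  coext (f ∘ counit)


/-- The list component of a coextension, depending only on the sequence. -/
def coextL {k : ℕ} {α β : Type} (f : PRW k α → β) (s : PSeq k α) : PSeq k β :=
  List.ofFn (fun j : Fin s.length => ((s.get j).1, f ⟨(s, j.1), j.2⟩))

lemma prw_eta {k : ℕ} {α : Type} (w : PRW k α) (h : w.1.2 < w.1.1.length) :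
    (⟨(w.1.1, w.1.2), h⟩ : PRW k α) = w := by
  cases w with
  | mk p h' => cases p; rfl

lemma coext_eq {k : ℕ} {α β : Type} (f : PRW k α → β) (w : PRW k α) :
    coext f w = ⟨(coextL f w.1.1, w.1.2), by simp [coextL, w.2]⟩ := rfl

lemma coextL_length {k : ℕ} {α β : Type} (f : PRW k α → β) (s : PSeq k α) :
    (coextL f s).length = s.length := by simp [coextL]

lemma coextL_get {k : ℕ} {α β : Type} (f : PRW k α → β) (s : PSeq k α)
    (l : ℕ) (h : l < (coextL f s).length) :
    (coextL f s).get ⟨l, h⟩ =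
      ((s.get ⟨l, by simpa [coextL] using h⟩).1,
        f ⟨(s, l), by simpa [coextL] using h⟩) := by
  simp [coextL, List.getElem_ofFn]

lemma counit_coext {k : ℕ} {α β : Type} (f : PRW k α → β) (w : PRW k α) :
    counit (coext f w) = f w := by
  have := coextL_get f w.1.1 w.1.2 (by simpa [coextL] using w.2)
  simp only [counit, eltOf, coext_eq]
  rw [this]
  exact congrArg f (prw_eta w _)

lemma pebOf_coext {k : ℕ} {α β : Type} (f : PRW k α → β) (w : PRW k α) :
    pebOf (coext f w) = pebOf w := by
  simp only [pebOf, coext_eq]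
  rw [coextL_get]

/-- (PR_k, ε, (·)*) is a comonad in coKleisli form on σ-structures. -/
theorem pr_comonad_coKleisli (σ : Signature) (k : ℕ) (A B C : Struct σ) :
    Hom (PR k A) A counit ∧
    (∀ f : PRW k A.carrier → B.carrier, Hom (PR k A) B f →
      Hom (PR k A) (PR k B) (coext f)) ∧
    coext (counit : PRW k A.carrier → A.carrier) = id ∧
    (∀ f : PRW k A.carrier → B.carrier, Hom (PR k A) B f →
      counit ∘ coext f = f) ∧
    (∀ (f : PRW k A.carrier → B.carrier) (g : PRW k B.carrier → C.carrier),
      Hom (PR k A) B f → Hom (PR k B) C g →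
      coext (g ∘ coext f) = coext g ∘ coext f) := by
  refine ⟨?_, ?_, ?_, ?_, ?_⟩
  · -- counit is a hom
    rintro r x ⟨h1, h2, h3⟩
    exact h3
  · -- coext of a hom is a hom
    rintro f hf r x ⟨h1, h2, h3⟩
    refine ⟨?_, ?_, ?_⟩
    · intro j j'
      simp only [coext_eq]
      exact congrArg (coextL f) (h1 j j')
    · intro j j'
      beta_reduce
      erw [pebOf_coext]
      show NoReoccur (coextL f (x j).1.1) (x j).1.2 (x j').1.2 (pebOf (x j))
      intro l hl hl1 hl2
      rw [coextL_get]
      exact h2 j j' l _ hl1 hl2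
    · have : (fun j => eltOf (coext f (x j))) = fun j => f (x j) := by
        funext j; exact counit_coext f (x j)
      rw [this]
      exact hf r x ⟨h1, h2, h3⟩
  · -- coext counit = id
    funext w
    apply Subtype.ext
    apply Prod.ext
    · show coextL counit w.1.1 = w.1.1
      apply List.ext_get (by simp [coextL])
      intro l h1' h2'
      rw [coextL_get]
      simp [counit, eltOf]
    · rfl
  · -- counit ∘ coext f = f
    intro f _; funext w; exact counit_coext f w
  · -- coext (g ∘ coext f) = coext g ∘ coext f
    intro f g _ _
    funext w
    apply Subtype.ext
    apply Prod.ext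
    · show coextL (g ∘ coext f) w.1.1 = coextL g (coextL f w.1.1)
      apply List.ext_get (by simp [coextL])
      intro l h1' h2'
      rw [coextL_get, coextL_get]
      refine Prod.ext ?_ ?_
      · rw [coextL_get]
      · show g (coext f ⟨(w.1.1, l), _⟩) = g ⟨(coextL f w.1.1, l), _⟩
        exact congrArg g (coext_eq f _)
    · rfl
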